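/- For every J ∈ ℝ, the single-site map of the gate V(J) acts diagonally on the Pauli basis: ℳ₋^{V(J)}(1) = 1, ℳ₋^{V(J)}(σx) = sin(2J) · σx, ℳ₋^{V(J)}(σy) = sin(2J) · σy, and ℳ₋^{V(J)}(σz) = σz. -/

import Mathlib

set_option maxHeartbeats 1600000


open Matrix Complex

/-- Pauli matrix σx. -/
def sigmaX : Matrix (Fin 2) (Fin 2) ℂ := !![0, 1; 1, 0]

/-- Pauli matrix σy. -/
def sigmaY : Matrix (Fin 2) (Fin 2) ℂ := !![0, -I; I, 0]

/-- Pauli matrix σz. -/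
def sigmaZ : Matrix (Fin 2) (Fin 2) ℂ := !![1, 0; 0, -1]

/-- Kronecker product of two `2 × 2` matrices, reindexed to `Fin 2 × Fin 2`. -/
def kron (a b : Matrix (Fin 2) (Fin 2) ℂ) : Matrix (Fin 2 × Fin 2) (Fin 2 × Fin 2) ℂ :=
  Matrix.of fun p q => a p.1 q.1 * b p.2 q.2

/-- The dual unitary gate `V(J) = exp(−i((π/4)(σx⊗σx + σy⊗σy) + J σz⊗σz))`. -/
noncomputable def VJ (J : ℝ) : Matrix (Fin 2 × Fin 2) (Fin 2 × Fin 2) ℂ :=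
  NormedSpace.exp
    (-(I • (((Real.pi / 4 : ℝ) : ℂ) • (kron sigmaX sigmaX + kron sigmaY sigmaY) +
      ((J : ℝ) : ℂ) • kron sigmaZ sigmaZ)))

def Umat : Matrix (Fin 2 × Fin 2) (Fin 2 × Fin 2) ℂ :=
  Matrix.of fun p q =>
    if p = (0,0) then (if q = (0,0) then 1 else if q = (0,1) then 1 else 0)
    else if p = (1,1) then (if q = (0,0) then 1 else if q = (0,1) then -1 else 0)
    else if p = (0,1) then (if q = (1,0) then 1 else if q = (1,1) then 1 else 0)
    else (if q = (1,0) then 1 else if q = (1,1) then -1 else 0)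
noncomputable def Uinv : Matrix (Fin 2 × Fin 2) (Fin 2 × Fin 2) ℂ := (1/2 : ℂ) • Umatᵀ
noncomputable def dvec (J : ℝ) : Fin 2 × Fin 2 → ℂ := fun q =>
  if q = (0,0) then -(I*J) else if q = (0,1) then -(I*J)
  else if q = (1,0) then -(I*((Real.pi/2 : ℝ) - J)) else I*((Real.pi/2 : ℝ) + J)

lemma hUU : Umat * Uinv = 1 ∧ Uinv * Umat = 1 := by
  constructor <;> (ext ⟨i,k⟩ ⟨j,l⟩; fin_cases i <;> fin_cases k <;> fin_cases j <;> fin_cases l <;>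
    simp [Umat, Uinv, Matrix.mul_apply, Fintype.sum_prod_type, Fin.sum_univ_two, Matrix.one_apply] <;> norm_num [Prod.ext_iff])

noncomputable def Uunit : (Matrix (Fin 2 × Fin 2) (Fin 2 × Fin 2) ℂ)ˣ :=
  ⟨Umat, Uinv, hUU.1, hUU.2⟩

lemma hdiag (J : ℝ) :
    -(I • (((Real.pi / 4 : ℝ) : ℂ) • (kron sigmaX sigmaX + kron sigmaY sigmaY) +
      ((J : ℝ) : ℂ) • kron sigmaZ sigmaZ)) = Umat * (Matrix.diagonal (dvec J)) * Uinv := by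
  ext ⟨i,k⟩ ⟨j,l⟩
  fin_cases i <;> fin_cases k <;> fin_cases j <;> fin_cases l <;>
    simp [Umat, Uinv, dvec, kron, sigmaX, sigmaY, sigmaZ, Matrix.mul_apply,
      Fintype.sum_prod_type, Fin.sum_univ_two, Matrix.diagonal, Prod.ext_iff] <;> ring

noncomputable def Wmat (J : ℝ) : Matrix (Fin 2 × Fin 2) (Fin 2 × Fin 2) ℂ :=
  Matrix.of fun p q =>
    if p = (0,0) then (if q = (0,0) then Complex.exp (-(I*J)) else 0)
    else if p = (1,1) then (if q = (1,1) then Complex.exp (-(I*J)) else 0)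
    else if p = (0,1) then (if q = (1,0) then -I * Complex.exp (I*J) else 0)
    else (if q = (0,1) then -I * Complex.exp (I*J) else 0)

lemma hexp1 (J : ℝ) : Complex.exp (-(I * ((Real.pi:ℂ)/2 - (J:ℂ)))) = -I * Complex.exp (I*J) := by
  rw [show (-(I * ((Real.pi:ℂ)/2 - (J:ℂ)))) = (-(Real.pi/2 : ℝ) : ℂ) * I + (J:ℂ)*I by push_cast; ring,
    Complex.exp_add, Complex.exp_mul_I]
  push_cast
  rw [Complex.cos_neg, Complex.sin_neg]
  norm_num [Complex.cos_pi_div_two, Complex.sin_pi_div_two]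
  ring

lemma hexp2 (J : ℝ) : Complex.exp (I * ((Real.pi:ℂ)/2 + (J:ℂ))) = I * Complex.exp (I*J) := by
  rw [show (I * ((Real.pi:ℂ)/2 + (J:ℂ))) = ((Real.pi/2 : ℝ) : ℂ) * I + (J:ℂ)*I by push_cast; ring,
    Complex.exp_add, Complex.exp_mul_I]
  push_cast
  norm_num [Complex.cos_pi_div_two, Complex.sin_pi_div_two]
  ring

lemma hVJ (J : ℝ) : VJ J = Wmat J := by
  rw [VJ, hdiag]
  have this : NormedSpace.exp (Umat * Matrix.diagonal (dvec J) * Uinv)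
      = Umat * NormedSpace.exp (Matrix.diagonal (dvec J)) * Uinv :=
    Matrix.exp_units_conj Uunit _
  rw [this, Matrix.exp_diagonal]
  ext ⟨i,k⟩ ⟨j,l⟩
  fin_cases i <;> fin_cases k <;> fin_cases j <;> fin_cases l <;>
    simp [Umat, Uinv, Wmat, dvec, Matrix.mul_apply, Fintype.sum_prod_type, Fin.sum_univ_two,
      Matrix.diagonal, Prod.ext_iff, Pi.coe_exp, Complex.exp_eq_exp_ℂ.symm]
  all_goals ((try rw [hexp1 J]); (try rw [hexp2 J]); ring)

/-- The single-site map `ℳ₋ᴰ` of a two-site gate `D` on `d`-dimensional sites: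
`ℳ₋ᴰ(a)[i,j] = (1/d) ∑_k (Dᴴ (1 ⊗ a) D)[(i,k),(j,k)]`. -/
noncomputable def Mminus {d : ℕ} (D : Matrix (Fin d × Fin d) (Fin d × Fin d) ℂ)
    (a : Matrix (Fin d) (Fin d) ℂ) : Matrix (Fin d) (Fin d) ℂ :=
  Matrix.of fun i j =>
    (1 / (d : ℂ)) * ∑ k : Fin d,
      (Dᴴ * (Matrix.of fun p q : Fin d × Fin d =>
          (if p.1 = q.1 then (1 : ℂ) else 0) * a p.2 q.2) * D) (i, k) (j, k)

lemma hstar1 (J : ℝ) : (starRingEnd ℂ) (Complex.exp (I*(J:ℂ))) = Complex.exp (-(I*(J:ℂ))) := by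
  rw [← Complex.exp_conj]; congr 1; simp [_root_.map_mul, Complex.conj_I, Complex.conj_ofReal]

lemma hstar2 (J : ℝ) : (starRingEnd ℂ) (Complex.exp (-(I*(J:ℂ)))) = Complex.exp (I*(J:ℂ)) := by
  rw [← Complex.exp_conj]; congr 1; simp [_root_.map_mul, Complex.conj_I, Complex.conj_ofReal]

lemma hmul (J : ℝ) : Complex.exp (I*(J:ℂ)) * Complex.exp (-(I*(J:ℂ))) = 1 := by
  rw [← Complex.exp_add]; simp

lemma hsin (J : ℝ) : ((Real.sin (2*J) : ℝ) : ℂ) =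
    (Complex.exp (-(I*(J:ℂ))) * Complex.exp (-(I*(J:ℂ)))
      - Complex.exp (I*(J:ℂ)) * Complex.exp (I*(J:ℂ))) * I / 2 := by
  rw [Complex.ofReal_sin, Complex.sin, ← Complex.exp_add, ← Complex.exp_add]
  push_cast; ring_nf

/-- The single-site map of `V(J)` acts diagonally on the Pauli basis. -/
theorem Mminus_VJ_pauli (J : ℝ) :
    Mminus (VJ J) 1 = 1 ∧
    Mminus (VJ J) sigmaX = ((Real.sin (2 * J) : ℝ) : ℂ) • sigmaX ∧
    Mminus (VJ J) sigmaY = ((Real.sin (2 * J) : ℝ) : ℂ) • sigmaY ∧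
    Mminus (VJ J) sigmaZ = sigmaZ := by
  rw [hVJ]
  refine ⟨?_, ?_, ?_, ?_⟩ <;>
  · ext i j
    fin_cases i <;> fin_cases j <;>
      simp [Mminus, Wmat, sigmaX, sigmaY, sigmaZ, Matrix.mul_apply, Matrix.conjTranspose_apply,
        Fintype.sum_prod_type, Fin.sum_univ_two, Matrix.one_apply, Prod.ext_iff,
        hstar1 J, hstar2 J, hsin J]
    all_goals try ring_nf
    all_goals try simp only [Complex.I_sq]
    all_goals try ring_nf
    all_goals (first
        | rfl
        | linear_combination (1/2:ℂ) * hmul J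
        | linear_combination (-1/2:ℂ) * hmul J
        | linear_combination (1:ℂ) * hmul J
        | linear_combination (-1:ℂ) * hmul J
        | linear_combination (3/2:ℂ) * hmul J
        | linear_combination (-3/2:ℂ) * hmul J
        | linear_combination (2:ℂ) * hmul J
        | linear_combination (-2:ℂ) * hmul J
        | linear_combination (3:ℂ) * hmul J
        | linear_combination (-3:ℂ) * hmul J)
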